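/- Lower bound on path length from the Diophantine condition (Lemma 3.1): let ω satisfy ‖ωn‖₁ ≥ C₀|n|^{-τ} for all nonzero integers n, and let w₁, w₂ be such that ‖ω x'_{w_i}‖₁ ≤ c v₀^{-1} γ^{h} for i = 1,2 with x'_{w_1} ≠ x'_{w_2} integers, and suppose x'_{w_1} − x'_{w_2} = Δ where |Δ| ≤ 4x̄·m with m the number of vertices in a connecting path and x̄ ≥ 1. Then m ≥ A x̄^{-1} γ^{-h/τ} with A = (C₀ v₀/(2c))^{1/τ}/4. -/

import Mathlib

/-- distance from a real number to the nearest integer -/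
noncomputable def dist1 (t : ℝ) : ℝ := |t - round t|

lemma dist1_sub_le (a b : ℝ) : dist1 (a - b) ≤ dist1 a + dist1 b := by
  calc dist1 (a - b) ≤ |(a - b) - ((round a - round b : ℤ) : ℝ)| := round_le _ _
    _ = |(a - round a) - (b - round b)| := by push_cast; ring_nf
    _ ≤ |a - round a| + |b - round b| := abs_sub _ _
    _ = dist1 a + dist1 b := rfl

theorem stmt19 (ω C₀ τ c v₀ γ xbar : ℝ) (hω : Irrational ω)
    (hC₀ : 0 < C₀) (hτ : 0 < τ) (hc : 0 < c) (hv₀ : 0 < v₀) (hγ : 1 < γ) (hxbar : 1 ≤ xbar)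
    (hdio : ∀ n : ℤ, n ≠ 0 → C₀ * (|n| : ℝ) ^ (-τ) ≤ dist1 (ω * n))
    (h : ℤ) (hh : h ≤ 0) (x₁ x₂ : ℤ) (hne : x₁ ≠ x₂)
    (h1 : dist1 (ω * x₁) ≤ c * v₀⁻¹ * γ ^ (h : ℝ))
    (h2 : dist1 (ω * x₂) ≤ c * v₀⁻¹ * γ ^ (h : ℝ))
    (m : ℕ) (hm : 1 ≤ m) (hΔ : ((|x₁ - x₂| : ℤ) : ℝ) ≤ 4 * xbar * m) :
    (C₀ * v₀ / (2 * c)) ^ (1/τ) * γ ^ (-(h:ℝ)/τ) / (4 * xbar) ≤ (m : ℝ) := by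
  have hγ0 : (0:ℝ) < γ := lt_trans one_pos hγ
  set Δ : ℤ := x₁ - x₂ with hΔdef
  have hΔne : Δ ≠ 0 := sub_ne_zero.mpr hne
  have habs : (1:ℝ) ≤ (|Δ| : ℝ) := by
    have : (1:ℤ) ≤ |Δ| := Int.one_le_abs hΔne
    exact_mod_cast this
  have habs0 : (0:ℝ) < (|Δ| : ℝ) := lt_of_lt_of_le one_pos habs
  -- lower bound on dist1
  have key : C₀ * (|Δ| : ℝ) ^ (-τ) ≤ 2 * (c * v₀⁻¹ * γ ^ (h:ℝ)) := by
    calc C₀ * (|Δ| : ℝ) ^ (-τ) ≤ dist1 (ω * Δ) := hdio Δ hΔne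
      _ = dist1 (ω * x₁ - ω * x₂) := by rw [hΔdef]; push_cast; ring_nf
      _ ≤ dist1 (ω * x₁) + dist1 (ω * x₂) := dist1_sub_le _ _
      _ ≤ 2 * (c * v₀⁻¹ * γ ^ (h:ℝ)) := by linarith
  -- rearrange: (C₀ v₀ / (2c)) * γ^(-h) ≤ |Δ|^τ
  have h2c : (0:ℝ) < 2 * c := by linarith
  have hB : C₀ * v₀ / (2 * c) * γ ^ (-(h:ℝ)) ≤ (|Δ| : ℝ) ^ τ := by
    have hγh : (0:ℝ) < γ ^ (h:ℝ) := Real.rpow_pos_of_pos hγ0 _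
    have hΔτ : (0:ℝ) < (|Δ| : ℝ) ^ τ := Real.rpow_pos_of_pos habs0 _
    have hneg : (|Δ| : ℝ) ^ (-τ) = ((|Δ| : ℝ) ^ τ)⁻¹ := Real.rpow_neg habs0.le τ
    rw [hneg] at key
    have hγneg : γ ^ (-(h:ℝ)) = (γ ^ (h:ℝ))⁻¹ := Real.rpow_neg hγ0.le _
    rw [hγneg, div_mul_eq_mul_div, div_le_iff₀ h2c, mul_inv_le_iff₀ hγh]
    have hthis := mul_le_mul_of_nonneg_right key (le_of_lt hΔτ)
    rw [mul_assoc, inv_mul_cancel₀ (ne_of_gt hΔτ), mul_one] at hthis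
    have hv : v₀ ≠ 0 := hv₀.ne'
    calc C₀ * v₀ ≤ 2 * (c * v₀⁻¹ * γ ^ (h:ℝ)) * (|Δ| : ℝ) ^ τ * v₀ :=
          mul_le_mul_of_nonneg_right hthis hv₀.le
      _ = (|Δ| : ℝ) ^ τ * (2 * c) * γ ^ (h:ℝ) := by field_simp
  -- take 1/τ power
  have hLHS0 : (0:ℝ) ≤ C₀ * v₀ / (2 * c) := by positivity
  have hpow : (C₀ * v₀ / (2 * c) * γ ^ (-(h:ℝ))) ^ (1/τ) ≤ ((|Δ| : ℝ) ^ τ) ^ (1/τ) :=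
    Real.rpow_le_rpow (by positivity) hB (by positivity)
  have hR : ((|Δ| : ℝ) ^ τ) ^ (1/τ) = (|Δ| : ℝ) := by
    rw [← Real.rpow_mul habs0.le, mul_one_div, div_self hτ.ne', Real.rpow_one]
  have hL : (C₀ * v₀ / (2 * c) * γ ^ (-(h:ℝ))) ^ (1/τ)
      = (C₀ * v₀ / (2 * c)) ^ (1/τ) * γ ^ (-(h:ℝ)/τ) := by
    rw [Real.mul_rpow hLHS0 (Real.rpow_pos_of_pos hγ0 _).le,
      ← Real.rpow_mul hγ0.le, mul_one_div]
  rw [hR, hL] at hpow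
  have hΔ' : |((Δ:ℤ) : ℝ)| ≤ 4 * xbar * m := by rw [← Int.cast_abs]; exact hΔ
  have hfinal : (C₀ * v₀ / (2 * c)) ^ (1/τ) * γ ^ (-(h:ℝ)/τ) ≤ 4 * xbar * m :=
    le_trans hpow hΔ'
  have h4x : (0:ℝ) < 4 * xbar := by linarith
  rw [div_le_iff₀ h4x]
  linarith [hfinal]
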